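/- Let M be a left S-semimodule such that every subtractive subsemimodule of M is a direct summand of M. Then every left S-semimodule P is M-e-projective. -/
import Mathlib


universe u

/-- `f` is `k`-normal. -/
def KNormal {S L M : Type*} [Semiring S] [AddCommMonoid L] [AddCommMonoid M]
    [Module S L] [Module S M] (f : L →ₗ[S] M) : Prop :=
  ∀ l₁ l₂ : L, f l₁ = f l₂ → ∃ k₁ k₂ : L, f k₁ = 0 ∧ f k₂ = 0 ∧ l₁ + k₁ = l₂ + k₂

/-- `P` is `M`-`e`-projective: for every normal epimorphism `f : M → N` and any
`g : P → N` there is a lift `h` with `f ∘ h = g`, and any other lift `h'`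
differs from `h` by kernel maps. -/
def MEProjective (S : Type u) [Semiring S] (P : Type u) [AddCommMonoid P]
    [Module S P] (M : Type u) [AddCommMonoid M] [Module S M] : Prop :=
  ∀ (N : Type u) (_ : AddCommMonoid N) (_ : Module S N)
    (f : M →ₗ[S] N), Function.Surjective f → KNormal f →
    ∀ g : P →ₗ[S] N, ∃ h : P →ₗ[S] M, f.comp h = g ∧
      ∀ h' : P →ₗ[S] M, f.comp h' = g →
        ∃ h₁ h₂ : P →ₗ[S] M, f.comp h₁ = 0 ∧ f.comp h₂ = 0 ∧ h + h₁ = h' + h₂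

/-- If every subtractive subsemimodule of `M` is a direct summand of `M`, then
every left `S`-semimodule is `M`-`e`-projective. -/
theorem meProjective_of_subtractive_summands
    (S : Type u) [Semiring S] (M : Type u) [AddCommMonoid M] [Module S M]
    (hM : ∀ K : Submodule S M,
      (∀ (m : M) (k k' : M), k ∈ K → k' ∈ K → m + k = k' → m ∈ K) →
      ∃ L : Submodule S M, ∀ m : M, ∃! p : K × L, (p.1 : M) + (p.2 : M) = m) :
    ∀ (P : Type u) (_ : AddCommMonoid P) (_ : Module S P),
      MEProjective S P M := by
  intro P _ _ N _ _ f hf hnorm g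
  classical
  set K := LinearMap.ker f with hK
  have hsub : ∀ (m k k' : M), k ∈ K → k' ∈ K → m + k = k' → m ∈ K := by
    intro m k k' hk hk' h
    simp only [hK, LinearMap.mem_ker] at hk hk' ⊢
    have : f m + f k = f k' := by rw [← map_add, h]
    rwa [hk, hk', add_zero] at this
  obtain ⟨L, hL⟩ := hM K hsub
  have huniq : ∀ (m : M) (p q : K × L),
      (p.1 : M) + (p.2 : M) = m → (q.1 : M) + (q.2 : M) = m → p = q :=
    fun m p q hp hq => (hL m).unique hp hq
  set fL : L →ₗ[S] N := f.comp L.subtype with hfL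
  have hinj : Function.Injective fL := by
    intro l₁ l₂ hl
    obtain ⟨k₁, k₂, hk₁, hk₂, hsum⟩ := hnorm _ _ hl
    have h1 : ((⟨k₁, LinearMap.mem_ker.mpr hk₁⟩ : K) : M) + (l₁ : M) = (l₁ : M) + k₁ :=
      add_comm _ _
    have hsum' : (l₁ : M) + k₁ = (l₂ : M) + k₂ := hsum
    have h2 : ((⟨k₂, LinearMap.mem_ker.mpr hk₂⟩ : K) : M) + (l₂ : M) = (l₁ : M) + k₁ := by
      rw [hsum']; exact add_comm _ _
    have := huniq _ (⟨k₁, LinearMap.mem_ker.mpr hk₁⟩, l₁) (⟨k₂, LinearMap.mem_ker.mpr hk₂⟩, l₂) h1 h2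
    exact congrArg Prod.snd this
  have hsurj : Function.Surjective fL := by
    intro n
    obtain ⟨m, hm⟩ := hf n
    obtain ⟨⟨k, l⟩, hkl, -⟩ := hL m
    refine ⟨l, ?_⟩
    have hk0 : f (k : M) = 0 := LinearMap.mem_ker.mp k.2
    have : fL l = f m := by
      rw [← hkl, map_add, hk0, zero_add]; rfl
    rw [this, hm]
  let e : L ≃ₗ[S] N := LinearEquiv.ofBijective fL ⟨hinj, hsurj⟩
  let h : P →ₗ[S] M := L.subtype.comp ((e.symm : N →ₗ[S] L).comp g)
  have hcomp : f.comp h = g := by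
    ext p
    show f ((e.symm (g p) : L) : M) = g p
    have : fL (e.symm (g p)) = g p := e.apply_symm_apply (g p)
    exact this
  -- projections
  have hmemK : ∀ m : M, ((hL m).choose.1 : M) ∈ K := fun m => ((hL m).choose.1).2
  have hdec : ∀ m : M, ((hL m).choose.1 : M) + ((hL m).choose.2 : M) = m :=
    fun m => (hL m).choose_spec.1
  let π : M →ₗ[S] M :=
    { toFun := fun m => ((hL m).choose.1 : M)
      map_add' := by
        intro m m'
        have hsum : ((⟨((hL m).choose.1 : M) + ((hL m').choose.1 : M),
            K.add_mem (hmemK m) (hmemK m')⟩ : K) : M) +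
            (((hL m).choose.2 + (hL m').choose.2 : L) : M) = m + m' := by
          push_cast
          rw [add_add_add_comm, hdec, hdec]
        have := huniq (m + m') (hL (m + m')).choose
          (⟨_, K.add_mem (hmemK m) (hmemK m')⟩, (hL m).choose.2 + (hL m').choose.2)
          (hdec (m + m')) hsum
        exact congrArg (fun p : K × L => (p.1 : M)) this
      map_smul' := by
        intro s m
        have hsum : ((⟨s • ((hL m).choose.1 : M), K.smul_mem s (hmemK m)⟩ : K) : M) +
            ((s • (hL m).choose.2 : L) : M) = s • m := by
          push_cast
          rw [← smul_add, hdec]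
        have := huniq (s • m) (hL (s • m)).choose
          (⟨_, K.smul_mem s (hmemK m)⟩, s • (hL m).choose.2)
          (hdec (s • m)) hsum
        exact congrArg (fun p : K × L => (p.1 : M)) this }
  have hπ0 : ∀ m : M, f (π m) = 0 := fun m => LinearMap.mem_ker.mp (hmemK m)
  refine ⟨h, hcomp, ?_⟩
  intro h' hh'
  refine ⟨π.comp h', 0, ?_, ?_, ?_⟩
  · ext p
    exact hπ0 (h' p)
  · ext p
    simp
  · ext p
    show h p + π (h' p) = h' p + (0 : P →ₗ[S] M) p
    have hfg : f (h' p) = g p := by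
      have := congrArg (fun φ : P →ₗ[S] N => φ p) hh'
      exact this
    have h1 : fL ((hL (h' p)).choose.2) = g p := by
      have hz : f (((hL (h' p)).choose.1 : M)) = 0 := LinearMap.mem_ker.mp (hmemK (h' p))
      have hd := congrArg f (hdec (h' p))
      rw [map_add, hz, zero_add] at hd
      rw [← hfg]
      exact hd
    have h2 : fL (e.symm (g p)) = g p := e.apply_symm_apply (g p)
    have hl2 : (hL (h' p)).choose.2 = e.symm (g p) := hinj (by rw [h1, h2])
    have hh : h p = ((hL (h' p)).choose.2 : M) := by
      show ((e.symm (g p) : L) : M) = _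
      rw [← hl2]
    calc h p + π (h' p)
        = ((hL (h' p)).choose.1 : M) + ((hL (h' p)).choose.2 : M) := by
          rw [hh]; exact add_comm _ _
      _ = h' p := hdec (h' p)
      _ = h' p + (0 : P →ₗ[S] M) p := by simp
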